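/- Let X ⊆ ℝⁿ be a nonempty convex compact set with κ = max_{x∈X} ‖x‖₂ > 0, C = cone({κ} × X) ⊆ ℝ^{n+1} and C° its polar cone. Let positive weights (ω_t), losses f_t ∈ ℝⁿ and decisions x_t ∈ X for t = 1,…,T, set v_t = (⟨f_t, x_t⟩/κ, −f_t), and define the CBA iterates u_0 = 0 and u_t = u_{t−1} + ω_t v_t. Assume the CBA choice rule: for every t there exists α_t ≥ 0 with π_C(u_{t−1}) = α_t · (κ, x_t). Then d(u_T, C°)² ≤ ∑_{t=1}^T ω_t² ‖v_t‖₂²; in particular, if ‖f_t‖₂ ≤ L for all t, then d(u_T, C°) ≤ √2 · L · √(∑_{t=1}^T ω_t²). -/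

import Mathlib

set_option autoImplicit false

open scoped RealInnerProductSpace
open Finset

noncomputable section

/-- The lifted vector `(t, y) ∈ ℝ × ℝⁿ = ℝ^{n+1}`. -/
def pr {n : ℕ} (t : ℝ) (y : EuclideanSpace ℝ (Fin n)) :
    EuclideanSpace ℝ (Fin (n + 1)) :=
  WithLp.toLp 2 (Fin.cons t (fun i => y i) : Fin (n + 1) → ℝ)

/-- The conic hull `cone({κ} × X) = {α • (κ, x) : α ≥ 0, x ∈ X}`. -/
def coneLift {n : ℕ} (κ : ℝ) (X : Set (EuclideanSpace ℝ (Fin n))) :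
    Set (EuclideanSpace ℝ (Fin (n + 1))) :=
  {u | ∃ α : ℝ, 0 ≤ α ∧ ∃ x ∈ X, u = α • pr κ x}

/-- The polar cone `C° = {z : ⟨z, w⟩ ≤ 0 ∀ w ∈ C}`. -/
def polarCone {E : Type*} [NormedAddCommGroup E] [InnerProductSpace ℝ E]
    (C : Set E) : Set E :=
  {z | ∀ w ∈ C, ⟪z, w⟫ ≤ 0}

/-- `p` is the Euclidean orthogonal projection of `u` onto the set `S`. -/
def IsProjOn {E : Type*} [NormedAddCommGroup E] [InnerProductSpace ℝ E]
    (u : E) (S : Set E) (p : E) : Prop :=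
  p ∈ S ∧ ∀ z ∈ S, dist u p ≤ dist u z

lemma pr_add {n : ℕ} (s t : ℝ) (y z : EuclideanSpace ℝ (Fin n)) :
    pr s y + pr t z = pr (s + t) (y + z) := by
  ext i; refine Fin.cases ?_ ?_ i <;> simp [pr]

lemma pr_smul {n : ℕ} (c s : ℝ) (y : EuclideanSpace ℝ (Fin n)) :
    c • pr s y = pr (c * s) (c • y) := by
  ext i; refine Fin.cases ?_ ?_ i <;> simp [pr]

lemma zero_mem_coneLift {n : ℕ} (κ : ℝ) {X : Set (EuclideanSpace ℝ (Fin n))}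
    (hXne : X.Nonempty) : (0 : EuclideanSpace ℝ (Fin (n+1))) ∈ coneLift κ X := by
  obtain ⟨x, hx⟩ := hXne
  exact ⟨0, le_refl 0, x, hx, by simp⟩

lemma smul_mem_coneLift {n : ℕ} {κ : ℝ} {X : Set (EuclideanSpace ℝ (Fin n))}
    {c : ℝ} (hc : 0 ≤ c) {a : EuclideanSpace ℝ (Fin (n+1))}
    (ha : a ∈ coneLift κ X) : c • a ∈ coneLift κ X := by
  obtain ⟨α, hα, x, hx, rfl⟩ := ha
  exact ⟨c * α, mul_nonneg hc hα, x, hx, (smul_smul c α _)⟩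

lemma add_mem_coneLift {n : ℕ} {κ : ℝ} {X : Set (EuclideanSpace ℝ (Fin n))}
    (hXcv : Convex ℝ X) {a b : EuclideanSpace ℝ (Fin (n+1))}
    (ha : a ∈ coneLift κ X) (hb : b ∈ coneLift κ X) : a + b ∈ coneLift κ X := by
  obtain ⟨α, hα, x, hx, rfl⟩ := ha
  obtain ⟨β, hβ, y, hy, rfl⟩ := hb
  rcases eq_or_lt_of_le (add_nonneg hα hβ) with h | h
  · have hα0 : α = 0 := by linarith [hα, hβ]
    have hβ0 : β = 0 := by linarith [hα, hβ]
    exact ⟨0, le_refl 0, x, hx, by simp [hα0, hβ0]⟩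
  · refine ⟨α + β, le_of_lt h, (α/(α+β)) • x + (β/(α+β)) • y, ?_, ?_⟩
    · exact hXcv hx hy (div_nonneg hα h.le) (div_nonneg hβ h.le)
        (by field_simp)
    · have h1 : (α + β) * (α / (α + β)) = α := by field_simp
      have h2 : (α + β) * (β / (α + β)) = β := by field_simp
      rw [pr_smul, pr_smul, pr_add, pr_smul, smul_add, smul_smul, smul_smul, h1, h2]
      ring_nf

lemma inner_pr {n : ℕ} (s t : ℝ) (y z : EuclideanSpace ℝ (Fin n)) :
    ⟪pr s y, pr t z⟫ = s * t + ⟪y, z⟫ := by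
  simp [pr, PiLp.inner_apply, Fin.sum_univ_succ, RCLike.inner_apply, mul_comm]

lemma norm_pr_sq {n : ℕ} (s : ℝ) (y : EuclideanSpace ℝ (Fin n)) :
    ‖pr s y‖ ^ 2 = s ^ 2 + ‖y‖ ^ 2 := by
  rw [← real_inner_self_eq_norm_sq, ← real_inner_self_eq_norm_sq, inner_pr]
  ring

lemma le_of_sq_le_sq' {a b : ℝ} (ha : 0 ≤ a) (hb : 0 ≤ b) (h : a ^ 2 ≤ b ^ 2) :
    a ≤ b := by nlinarith [sq_nonneg (a - b), sq_nonneg (a + b)]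

lemma proj_varineq {E : Type*} [NormedAddCommGroup E] [InnerProductSpace ℝ E]
    {u q : E} {S : Set E} (hS : Convex ℝ S) (h : IsProjOn u S q)
    {z : E} (hz : z ∈ S) : ⟪u - q, z - q⟫ ≤ 0 := by
  by_contra hpos
  push_neg at hpos
  set a := ⟪u - q, z - q⟫ with ha
  have hzq : z ≠ q := by
    intro hzq
    have : a = 0 := by rw [ha, hzq, sub_self, inner_zero_right]
    linarith
  have hb : (0:ℝ) < ‖z - q‖ ^ 2 := by
    have h0 : 0 < ‖z - q‖ := norm_pos_iff.mpr (sub_ne_zero.mpr hzq)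
    positivity
  set b := ‖z - q‖ ^ 2 with hbdef
  set θ := min 1 (a / b) with hθ
  have hθ0 : 0 < θ := lt_min one_pos (div_pos hpos hb)
  have hθ1 : θ ≤ 1 := min_le_left _ _
  have hθb : θ * b ≤ a := by
    have h2 := min_le_right 1 (a / b)
    calc θ * b ≤ (a / b) * b := by nlinarith
    _ = a := by field_simp
  have hmem : q + θ • (z - q) ∈ S := by
    have h2 : (1 - θ) • q + θ • z ∈ S :=
      hS h.1 hz (by linarith) hθ0.le (by ring)
    have heq : q + θ • (z - q) = (1 - θ) • q + θ • z := by
      rw [smul_sub, sub_smul, one_smul]; abel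
    rw [heq]; exact h2
  have hd := h.2 _ hmem
  rw [dist_eq_norm, dist_eq_norm] at hd
  have hsq : ‖u - q‖ ^ 2 ≤ ‖u - (q + θ • (z - q))‖ ^ 2 :=
    pow_le_pow_left₀ (norm_nonneg _) hd 2
  have hexp : ‖u - (q + θ • (z - q))‖ ^ 2
      = ‖u - q‖ ^ 2 - 2 * θ * a + θ ^ 2 * b := by
    have heq : u - (q + θ • (z - q)) = (u - q) - θ • (z - q) := by abel
    rw [heq, norm_sub_sq_real, real_inner_smul_right, norm_smul,
      Real.norm_eq_abs, abs_of_pos hθ0, ha, hbdef]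
    ring
  nlinarith [mul_pos hθ0 hpos]

lemma cba_step {n : ℕ} {X : Set (EuclideanSpace ℝ (Fin n))}
    (hXne : X.Nonempty) (hXcv : Convex ℝ X) {κ : ℝ} (hκpos : 0 < κ)
    {u' : EuclideanSpace ℝ (Fin (n+1))} {α : ℝ} (hα : 0 ≤ α)
    {xt ft : EuclideanSpace ℝ (Fin n)} (hxt : xt ∈ X)
    (hproj : IsProjOn u' (coneLift κ X) (α • pr κ xt))
    (ωt : ℝ) {vt : EuclideanSpace ℝ (Fin (n+1))}
    (hvt : vt = pr (⟪ft, xt⟫ / κ) (-ft)) :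
    Metric.infDist (u' + ωt • vt) (polarCone (coneLift κ X)) ^ 2
      ≤ Metric.infDist u' (polarCone (coneLift κ X)) ^ 2 + ωt ^ 2 * ‖vt‖ ^ 2 := by
  set C := coneLift κ X with hC
  set q : EuclideanSpace ℝ (Fin (n+1)) := α • pr κ xt with hq
  have hCcv : Convex ℝ C := by
    intro a ha b hb s t hs ht hst
    exact add_mem_coneLift hXcv (smul_mem_coneLift hs ha) (smul_mem_coneLift ht hb)
  have hqC : q ∈ C := ⟨α, hα, xt, hxt, rfl⟩
  set p := u' - q with hp
  have hpC : p ∈ polarCone C := by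
    intro w hw
    have h1 := proj_varineq hCcv hproj (add_mem_coneLift hXcv hqC hw)
    simpa [hp, hq, add_sub_cancel_left] using h1
  have hpq : ⟪p, q⟫ = 0 := by
    have h1 : ⟪p, q⟫ ≤ 0 := by
      have h2 := proj_varineq hCcv hproj (add_mem_coneLift hXcv hqC hqC)
      simpa [hp, add_sub_cancel_left] using h2
    have h2 : (0:ℝ) ≤ ⟪p, q⟫ := by
      have h3 := proj_varineq hCcv hproj (zero_mem_coneLift κ hXne)
      rw [zero_sub, inner_neg_right] at h3
      rw [hp]; linarith
    linarith
  have hqv : ⟪q, vt⟫ = 0 := by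
    rw [hq, hvt, real_inner_smul_left, inner_pr, inner_neg_right,
      real_inner_comm xt ft]
    field_simp
    ring
  have hCpol_ne : (polarCone C).Nonempty := ⟨0, fun w _ => by simp⟩
  have hlow : ‖q‖ ≤ Metric.infDist u' (polarCone C) := by
    by_contra hlt
    push_neg at hlt
    obtain ⟨z, hz, hdz⟩ := (Metric.infDist_lt_iff hCpol_ne).mp hlt
    have hdecomp : u' - z = q + (p - z) := by rw [hp]; abel
    have hinner : (0:ℝ) ≤ ⟪q, p - z⟫ := by
      rw [inner_sub_right]
      have h4 := hz q hqC
      have h5 := real_inner_comm q p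
      have h6 := real_inner_comm z q
      linarith [hpq]
    have hge : ‖q‖ ^ 2 ≤ ‖u' - z‖ ^ 2 := by
      rw [hdecomp, norm_add_sq_real]
      nlinarith [sq_nonneg ‖p - z‖]
    have := le_of_sq_le_sq' (norm_nonneg q) (norm_nonneg _) hge
    rw [dist_eq_norm] at hdz
    linarith
  have hub : Metric.infDist (u' + ωt • vt) (polarCone C) ≤ ‖q + ωt • vt‖ := by
    have heq : dist (u' + ωt • vt) p = ‖q + ωt • vt‖ := by
      rw [dist_eq_norm]; congr 1; rw [hp]; abel
    rw [← heq]
    exact Metric.infDist_le_dist_of_mem hpC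
  have hnorm : ‖q + ωt • vt‖ ^ 2 = ‖q‖ ^ 2 + ωt ^ 2 * ‖vt‖ ^ 2 := by
    have hs : ‖ωt • vt‖ ^ 2 = ωt ^ 2 * ‖vt‖ ^ 2 := by
      rw [norm_smul, Real.norm_eq_abs, mul_pow, sq_abs]
    rw [norm_add_sq_real, real_inner_smul_right, hqv, hs]
    ring
  have h1 : Metric.infDist (u' + ωt • vt) (polarCone C) ^ 2 ≤ ‖q + ωt • vt‖ ^ 2 :=
    pow_le_pow_left₀ Metric.infDist_nonneg hub 2
  have h2 : ‖q‖ ^ 2 ≤ Metric.infDist u' (polarCone C) ^ 2 :=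
    pow_le_pow_left₀ (norm_nonneg q) hlow 2
  rw [hnorm] at h1
  linarith


/-- distance bound for CBA: with iterates `u_t = u_{t-1} + ω_t v_t`,
`v_t = (⟨f_t, x_t⟩/κ, −f_t)`, and decisions chosen by the CBA rule
`π_C(u_{t-1}) = α_t • (κ, x_t)`, one has `d(u_T, C°)² ≤ ∑ ω_t² ‖v_t‖²`; in
particular `d(u_T, C°) ≤ √2 · L · √(∑ ω_t²)` when `‖f_t‖₂ ≤ L`. -/
theorem stmt4 {n : ℕ} (X : Set (EuclideanSpace ℝ (Fin n)))
    (hXne : X.Nonempty) (hXcv : Convex ℝ X) (hXcp : IsCompact X)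
    (κ : ℝ) (hκ : IsGreatest ((fun x => ‖x‖) '' X) κ) (hκpos : 0 < κ)
    (T : ℕ) (hT : 1 ≤ T) (ω : ℕ → ℝ) (hω : ∀ t ∈ Icc 1 T, 0 < ω t)
    (f x : ℕ → EuclideanSpace ℝ (Fin n)) (hx : ∀ t ∈ Icc 1 T, x t ∈ X)
    (L : ℝ) (hL : ∀ t ∈ Icc 1 T, ‖f t‖ ≤ L)
    (v : ℕ → EuclideanSpace ℝ (Fin (n + 1)))
    (hv : ∀ t, v t = pr (⟪f t, x t⟫ / κ) (-(f t)))
    (u : ℕ → EuclideanSpace ℝ (Fin (n + 1)))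
    (hu0 : u 0 = 0) (hu : ∀ t ∈ Icc 1 T, u t = u (t - 1) + ω t • v t)
    (hchoice : ∀ t ∈ Icc 1 T, ∃ α : ℝ, 0 ≤ α ∧
      IsProjOn (u (t - 1)) (coneLift κ X) (α • pr κ (x t))) :
    (Metric.infDist (u T) (polarCone (coneLift κ X))) ^ 2
        ≤ ∑ t ∈ Icc 1 T, ω t ^ 2 * ‖v t‖ ^ 2 ∧
      Metric.infDist (u T) (polarCone (coneLift κ X))
        ≤ Real.sqrt 2 * L * Real.sqrt (∑ t ∈ Icc 1 T, ω t ^ 2) := by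
  set C := coneLift κ X with hC
  -- main induction
  have key : ∀ t, t ≤ T → Metric.infDist (u t) (polarCone C) ^ 2
      ≤ ∑ s ∈ Icc 1 t, ω s ^ 2 * ‖v s‖ ^ 2 := by
    intro t
    induction t with
    | zero =>
      intro _
      have h0 : (0 : EuclideanSpace ℝ (Fin (n+1))) ∈ polarCone C :=
        fun w _ => by simp
      rw [hu0, Metric.infDist_zero_of_mem h0]
      simp
    | succ t ih =>
      intro h
      have ht' : t + 1 ∈ Icc 1 T := mem_Icc.mpr ⟨Nat.succ_le_succ (Nat.zero_le t), h⟩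
      obtain ⟨α, hα, hproj⟩ := hchoice (t + 1) ht'
      rw [Nat.add_sub_cancel] at hproj
      have hstep := cba_step hXne hXcv hκpos hα (hx (t + 1) ht') hproj
        (ω (t + 1)) (hv (t + 1))
      have hut : u (t + 1) = u t + ω (t + 1) • v (t + 1) := by
        have := hu (t + 1) ht'
        rwa [Nat.add_sub_cancel] at this
      rw [hut]
      have hsum : ∑ s ∈ Icc 1 (t + 1), ω s ^ 2 * ‖v s‖ ^ 2
          = (∑ s ∈ Icc 1 t, ω s ^ 2 * ‖v s‖ ^ 2) + ω (t+1) ^ 2 * ‖v (t+1)‖ ^ 2 :=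
        Finset.sum_Icc_succ_top (Nat.succ_le_succ (Nat.zero_le t)) _
      rw [hsum]
      have := ih (Nat.le_of_succ_le h)
      linarith
  have h1 := key T le_rfl
  refine ⟨h1, ?_⟩
  -- bound each ‖v t‖^2 by 2 L^2
  have hL0 : 0 ≤ L := le_trans (norm_nonneg _) (hL 1 (mem_Icc.mpr ⟨le_rfl, hT⟩))
  have hvb : ∀ t ∈ Icc 1 T, ‖v t‖ ^ 2 ≤ 2 * L ^ 2 := by
    intro t ht
    rw [hv t, norm_pr_sq, norm_neg]
    have hxκ : ‖x t‖ ≤ κ := hκ.2 ⟨x t, hx t ht, rfl⟩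
    have hcs : |⟪f t, x t⟫| ≤ ‖f t‖ * ‖x t‖ := abs_real_inner_le_norm _ _
    have hft : ‖f t‖ ≤ L := hL t ht
    have h2 : (⟪f t, x t⟫ / κ) ^ 2 ≤ ‖f t‖ ^ 2 := by
      rw [div_pow]
      rw [div_le_iff₀ (by positivity)]
      have ha2 : ⟪f t, x t⟫ ^ 2 ≤ (‖f t‖ * ‖x t‖) ^ 2 := by
        rw [← sq_abs]
        exact pow_le_pow_left₀ (abs_nonneg _) hcs 2
      have hx2 : ‖x t‖ ^ 2 ≤ κ ^ 2 := pow_le_pow_left₀ (norm_nonneg _) hxκ 2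
      nlinarith [mul_le_mul_of_nonneg_left hx2 (sq_nonneg ‖f t‖)]
    nlinarith [norm_nonneg (f t)]
  have hsum2 : ∑ t ∈ Icc 1 T, ω t ^ 2 * ‖v t‖ ^ 2
      ≤ 2 * L ^ 2 * ∑ t ∈ Icc 1 T, ω t ^ 2 := by
    rw [Finset.mul_sum]
    apply Finset.sum_le_sum
    intro t ht
    have := hvb t ht
    nlinarith [sq_nonneg (ω t)]
  have hD0 : 0 ≤ Metric.infDist (u T) (polarCone C) := Metric.infDist_nonneg
  apply le_of_sq_le_sq' hD0 (by positivity)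
  calc Metric.infDist (u T) (polarCone C) ^ 2
      ≤ 2 * L ^ 2 * ∑ t ∈ Icc 1 T, ω t ^ 2 := le_trans h1 hsum2
    _ = (Real.sqrt 2 * L * Real.sqrt (∑ t ∈ Icc 1 T, ω t ^ 2)) ^ 2 := by
        have hS : 0 ≤ ∑ t ∈ Icc 1 T, ω t ^ 2 :=
          Finset.sum_nonneg fun t _ => sq_nonneg _
        rw [mul_pow, mul_pow, Real.sq_sqrt (by norm_num : (0:ℝ) ≤ 2),
          Real.sq_sqrt hS]

end
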